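/- In the projective special linear group PSL(2, F_7) (the quotient of SL(2, ℤ/7ℤ) by its center), any two elements of order 2 are conjugate; that is, PSL(2, F_7) has exactly one conjugacy class of elements of order 2. -/

import Mathlib

/-- `PSL(2, 𝔽₇)`: the quotient of `SL(2, ℤ/7ℤ)` by its center. -/
abbrev PSL27 :=
  Matrix.SpecialLinearGroup (Fin 2) (ZMod 7) ⧸
    Subgroup.center (Matrix.SpecialLinearGroup (Fin 2) (ZMod 7))

open Matrix

abbrev SL27' := Matrix.SpecialLinearGroup (Fin 2) (ZMod 7)

set_option maxHeartbeats 1000000 in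
lemma zmod7_sq_one' (r : ZMod 7) (h : r ^ 2 = 1) : r = 1 ∨ r = -1 := by revert r h; decide

set_option maxHeartbeats 1000000 in
lemma sl_sq_one_entries' : ∀ a b c d : ZMod 7, a*d - b*c = 1 →
    a*a + b*c = 1 → a*b + b*d = 0 → c*a + d*c = 0 →
    (a = 1 ∧ b = 0 ∧ c = 0 ∧ d = 1) ∨ (a = -1 ∧ b = 0 ∧ c = 0 ∧ d = -1) := by decide

set_option maxHeartbeats 1000000 in
lemma trace_zero_entries' : ∀ a b c d : ZMod 7, a*d - b*c = 1 →
    a*a + b*c = -1 → a*b + b*d = 0 → c*a + d*c = 0 → d = -a := by decide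

set_option maxHeartbeats 1000000 in
lemma exists_pq' : ∀ a b c : ZMod 7, a*a + b*c = -1 →
    ∃ p q : ZMod 7, p*(q*a - p*b) - q*(-(p*a + q*c)) = 1 := by decide

def Jmat' : SL27' := ⟨!![0, -1; 1, 0], by simp [Matrix.det_fin_two_of]⟩

lemma key' (A : SL27') (hA : (A : Matrix (Fin 2) (Fin 2) (ZMod 7)) * A = -1) :
    ∃ C : SL27', C * A = Jmat' * C := by
  have hdet : (A : Matrix (Fin 2) (Fin 2) (ZMod 7)) 0 0 * A.1 1 1 - A.1 0 1 * A.1 1 0 = 1 := by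
    have := A.2; rwa [Matrix.det_fin_two] at this
  have e00 : A.1 0 0 * A.1 0 0 + A.1 0 1 * A.1 1 0 = -1 := by
    have := congrFun (congrFun hA 0) 0
    simpa [Matrix.mul_apply, Fin.sum_univ_two] using this
  have e01 : A.1 0 0 * A.1 0 1 + A.1 0 1 * A.1 1 1 = 0 := by
    have := congrFun (congrFun hA 0) 1
    simpa [Matrix.mul_apply, Fin.sum_univ_two] using this
  have e10 : A.1 1 0 * A.1 0 0 + A.1 1 1 * A.1 1 0 = 0 := by
    have := congrFun (congrFun hA 1) 0
    simpa [Matrix.mul_apply, Fin.sum_univ_two] using this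
  have hda : A.1 1 1 = -(A.1 0 0) :=
    trace_zero_entries' _ _ _ _ hdet e00 e01 e10
  obtain ⟨p, q, hpq⟩ := exists_pq' (A.1 0 0) (A.1 0 1) (A.1 1 0) e00
  refine ⟨⟨!![p, q; -(p * A.1 0 0 + q * A.1 1 0), q * A.1 0 0 - p * A.1 0 1], by
    rw [Matrix.det_fin_two_of]; linear_combination hpq⟩, ?_⟩
  apply Subtype.ext
  show (!![p, q; -(p * A.1 0 0 + q * A.1 1 0), q * A.1 0 0 - p * A.1 0 1]
        : Matrix (Fin 2) (Fin 2) (ZMod 7)) * A.1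
      = !![0, -1; 1, 0] * !![p, q; -(p * A.1 0 0 + q * A.1 1 0), q * A.1 0 0 - p * A.1 0 1]
  ext i j
  fin_cases i <;> fin_cases j <;>
    simp [Matrix.mul_apply, Fin.sum_univ_two, hda] <;>
    first
      | ring1
      | linear_combination (-p) * e00
      | linear_combination (-q) * e00

lemma neg_one_mem_center' :
    ∃ N : SL27', (N : Matrix (Fin 2) (Fin 2) (ZMod 7)) = -1 ∧
      N ∈ Subgroup.center SL27' := by
  refine ⟨⟨-1, by simp [Matrix.det_fin_two]⟩, rfl, ?_⟩
  apply Matrix.SpecialLinearGroup.mem_center_iff.mpr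
  refine ⟨-1, by norm_num, ?_⟩
  show (Matrix.scalar (Fin 2)) (-1 : ZMod 7) = (-1 : Matrix (Fin 2) (Fin 2) (ZMod 7))
  rw [Matrix.scalar_apply]
  ext i j
  fin_cases i <;> fin_cases j <;> simp [Matrix.diagonal_apply]

lemma sq_eq_neg_one' (A : SL27') (h : orderOf (QuotientGroup.mk A : PSL27) = 2) :
    (A : Matrix (Fin 2) (Fin 2) (ZMod 7)) * A = -1 := by
  have h1 : (QuotientGroup.mk A : PSL27) ^ 2 = 1 := by
    have := pow_orderOf_eq_one (QuotientGroup.mk A : PSL27)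
    rwa [h] at this
  have h2 : A ^ 2 ∈ Subgroup.center SL27' := by
    rw [← QuotientGroup.eq_one_iff]
    simpa using h1
  rw [Matrix.SpecialLinearGroup.mem_center_iff] at h2
  obtain ⟨r, hr2, hrA⟩ := h2
  simp only [Fintype.card_fin] at hr2
  have hrA' : (Matrix.scalar (Fin 2)) r = (A : Matrix (Fin 2) (Fin 2) (ZMod 7)) * A := by
    rw [hrA]; simp [pow_two]
  rcases zmod7_sq_one' r hr2 with rfl | rfl
  · -- A^2 = 1; then A = ±1, so mk A = 1, contradicting order 2
    exfalso
    have hAA : (A : Matrix (Fin 2) (Fin 2) (ZMod 7)) * A = 1 := by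
      rw [← hrA']; simp
    have hdet : A.1 0 0 * A.1 1 1 - A.1 0 1 * A.1 1 0 = 1 := by
      have := A.2; rwa [Matrix.det_fin_two] at this
    have e00 : A.1 0 0 * A.1 0 0 + A.1 0 1 * A.1 1 0 = 1 := by
      have := congrFun (congrFun hAA 0) 0
      simpa [Matrix.mul_apply, Fin.sum_univ_two, Matrix.one_apply] using this
    have e01 : A.1 0 0 * A.1 0 1 + A.1 0 1 * A.1 1 1 = 0 := by
      have := congrFun (congrFun hAA 0) 1
      simpa [Matrix.mul_apply, Fin.sum_univ_two, Matrix.one_apply] using this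
    have e10 : A.1 1 0 * A.1 0 0 + A.1 1 1 * A.1 1 0 = 0 := by
      have := congrFun (congrFun hAA 1) 0
      simpa [Matrix.mul_apply, Fin.sum_univ_two, Matrix.one_apply] using this
    have hcenter : A ∈ Subgroup.center SL27' := by
      rcases sl_sq_one_entries' _ _ _ _ hdet e00 e01 e10 with ⟨h1, h2, h3, h4⟩ | ⟨h1, h2, h3, h4⟩
      · have : A = 1 := by
          apply Subtype.ext; ext i j
          fin_cases i <;> fin_cases j <;> simp [h1, h2, h3, h4, Matrix.one_apply]
        rw [this]; exact Subgroup.one_mem _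
      · obtain ⟨N, hN, hNc⟩ := neg_one_mem_center'
        have : A = N := by
          apply Subtype.ext; rw [hN]; ext i j
          fin_cases i <;> fin_cases j <;> simp [h1, h2, h3, h4, Matrix.one_apply]
        rw [this]; exact hNc
    have : (QuotientGroup.mk A : PSL27) = 1 := (QuotientGroup.eq_one_iff _).mpr hcenter
    rw [this] at h
    simp at h
  · rw [← hrA', Matrix.scalar_apply]
    ext i j
    fin_cases i <;> fin_cases j <;> simp [Matrix.diagonal_apply]

/-- In `PSL(2, 𝔽₇)` any two elements of order 2 are conjugate: there is exactly one
conjugacy class of elements of order 2. -/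
theorem psl27_order_two_conjugate (x y : PSL27)
    (hx : orderOf x = 2) (hy : orderOf y = 2) : IsConj x y := by
  obtain ⟨A, rfl⟩ := QuotientGroup.mk_surjective x
  obtain ⟨B, rfl⟩ := QuotientGroup.mk_surjective y
  obtain ⟨C, hC⟩ := key' A (sq_eq_neg_one' A hx)
  obtain ⟨D, hD⟩ := key' B (sq_eq_neg_one' B hy)
  have hC' : C * A * C⁻¹ = Jmat' := by rw [hC]; group
  have hD' : D * B * D⁻¹ = Jmat' := by rw [hD]; group
  have c1 : IsConj (QuotientGroup.mk A : PSL27) (QuotientGroup.mk Jmat') := by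
    rw [isConj_iff]
    exact ⟨QuotientGroup.mk C, by rw [← QuotientGroup.mk_inv, ← QuotientGroup.mk_mul,
      ← QuotientGroup.mk_mul, hC']⟩
  have c2 : IsConj (QuotientGroup.mk B : PSL27) (QuotientGroup.mk Jmat') := by
    rw [isConj_iff]
    exact ⟨QuotientGroup.mk D, by rw [← QuotientGroup.mk_inv, ← QuotientGroup.mk_mul,
      ← QuotientGroup.mk_mul, hD']⟩
  exact c1.trans c2.symm
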